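/- Let p,q be coprime, q > 0, c_{p/q} as above. The subgroup H = ℤ·(k,0) ⊕ ℤ·(m,n) of ℤ² with k,n > 0 is maximal among subgroups of ℤ² on which c_{p/q} is symmetric if and only if n·k = q. -/

import Mathlib

noncomputable def cθ (θ : ℝ) (x y : ℤ × ℤ) : Circle :=
  Circle.exp (2 * Real.pi * θ * (x.2 : ℝ) * (y.1 : ℝ))

lemma mem_closure_pair_iff (K1 M N : ℤ) (x : ℤ × ℤ) :
    x ∈ AddSubgroup.closure {((K1, 0) : ℤ × ℤ), (M, N)} ↔
      ∃ a b : ℤ, x = (a * K1 + b * M, b * N) := by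
  rw [AddSubgroup.mem_closure_pair]
  constructor
  · rintro ⟨a, b, rfl⟩
    exact ⟨a, b, by simp [Prod.ext_iff, zsmul_eq_mul]⟩
  · rintro ⟨a, b, rfl⟩
    exact ⟨a, b, by simp [Prod.ext_iff, zsmul_eq_mul]⟩

lemma key (p q : ℤ) (hq : 0 < q) (hcop : IsCoprime p q) (x y : ℤ × ℤ) :
    cθ ((p : ℝ) / (q : ℝ)) x y = cθ ((p : ℝ) / (q : ℝ)) y x ↔
      q ∣ (x.2 * y.1 - x.1 * y.2) := by
  have hq0 : (q : ℝ) ≠ 0 := by exact_mod_cast hq.ne'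
  have hπ : Real.pi ≠ 0 := Real.pi_ne_zero
  rw [cθ, cθ, Circle.exp_eq_exp]
  constructor
  · rintro ⟨z, hz⟩
    field_simp at hz
    have h2 : (2 * Real.pi) * ((p : ℝ) * (x.2 * y.1 - x.1 * y.2) - z * q) = 0 := by
      linear_combination (2 * Real.pi) * hz
    rcases mul_eq_zero.1 h2 with h | h
    · exact absurd h (by positivity)
    · have hz' : (p : ℝ) * (x.2 * y.1 - x.1 * y.2) = z * q := by linarith
      have hzz : p * (x.2 * y.1 - x.1 * y.2) = z * q := by exact_mod_cast hz'
      exact hcop.symm.dvd_of_dvd_mul_left ⟨z, by linarith⟩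
  · rintro ⟨z, hz⟩
    refine ⟨p * z, ?_⟩
    have hz' : (x.2 * y.1 : ℝ) - x.1 * y.2 = q * z := by exact_mod_cast hz
    field_simp
    push_cast
    linear_combination (p : ℝ) * hz'

lemma sym_pair (p q : ℤ) (hq : 0 < q) (hcop : IsCoprime p q) (K1 M N : ℤ)
    (hdvd : q ∣ K1 * N) :
    ∀ x ∈ AddSubgroup.closure {((K1, 0) : ℤ × ℤ), (M, N)},
      ∀ y ∈ AddSubgroup.closure {((K1, 0) : ℤ × ℤ), (M, N)},
        cθ ((p : ℝ) / (q : ℝ)) x y = cθ ((p : ℝ) / (q : ℝ)) y x := by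
  intro x hx y hy
  rw [key p q hq hcop]
  obtain ⟨a, b, rfl⟩ := (mem_closure_pair_iff K1 M N x).1 hx
  obtain ⟨c, d, rfl⟩ := (mem_closure_pair_iff K1 M N y).1 hy
  have : (b * N) * (c * K1 + d * M) - (a * K1 + b * M) * (d * N)
      = (K1 * N) * (b * c - a * d) := by ring
  rw [this]
  exact hdvd.mul_right _

theorem stmt13 (p q : ℤ) (hq : 0 < q) (hcop : IsCoprime p q)
    (k m n : ℤ) (hk : 0 < k) (hn : 0 < n) :
    ((∀ x ∈ AddSubgroup.closure {((k, 0) : ℤ × ℤ), (m, n)},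
        ∀ y ∈ AddSubgroup.closure {((k, 0) : ℤ × ℤ), (m, n)},
          cθ ((p : ℝ) / (q : ℝ)) x y = cθ ((p : ℝ) / (q : ℝ)) y x) ∧
      (∀ K : AddSubgroup (ℤ × ℤ),
        AddSubgroup.closure {((k, 0) : ℤ × ℤ), (m, n)} ≤ K →
        (∀ x ∈ K, ∀ y ∈ K, cθ ((p : ℝ) / (q : ℝ)) x y = cθ ((p : ℝ) / (q : ℝ)) y x) →
        K = AddSubgroup.closure {((k, 0) : ℤ × ℤ), (m, n)})) ↔ n * k = q := by
  constructor
  · rintro ⟨hsym, hmax⟩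
    have hgen1 : ((k, 0) : ℤ × ℤ) ∈ AddSubgroup.closure {((k, 0) : ℤ × ℤ), (m, n)} :=
      AddSubgroup.subset_closure (by simp)
    have hgen2 : ((m, n) : ℤ × ℤ) ∈ AddSubgroup.closure {((k, 0) : ℤ × ℤ), (m, n)} :=
      AddSubgroup.subset_closure (by simp)
    have hdvd : q ∣ n * k := by
      have := (key p q hq hcop (m, n) (k, 0)).1 (hsym _ hgen2 _ hgen1)
      simpa using this
    by_contra hne
    obtain ⟨s, hs⟩ := hdvd
    have hnk0 : 0 < n * k := mul_pos hn hk
    have hspos : 0 < s := by nlinarith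
    have hsne : s ≠ 1 := by rintro rfl; rw [mul_one] at hs; exact hne hs
    have hs1 : 1 < s := by omega
    obtain ⟨r, hrp, hrs, hr1⟩ : ∃ r : ℤ, Prime r ∧ r ∣ s ∧ 1 < r := by
      have hsna : s.natAbs ≠ 1 := by omega
      refine ⟨(s.natAbs.minFac : ℤ), ?_, ?_, ?_⟩
      · rw [Int.prime_iff_natAbs_prime]
        simpa using Nat.minFac_prime hsna
      · exact (Int.natCast_dvd_natCast.mpr (Nat.minFac_dvd _)).trans (Int.natAbs_dvd.mpr dvd_rfl)
      · exact_mod_cast (Nat.minFac_prime hsna).two_le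
    have hr0 : r ≠ 0 := by omega
    have hrnk : r ∣ n * k := hs ▸ (hrs.mul_left q)
    obtain ⟨s', hs'⟩ := hrs
    by_cases hrk : r ∣ k
    · -- enlarge via (k/r, 0)
      obtain ⟨k', hk'⟩ := hrk
      subst hk'
      subst hs'
      have hqd : q ∣ k' * n := by
        refine ⟨s', ?_⟩
        exact mul_left_cancel₀ hr0 (show r * (k' * n) = r * (q * s') by linear_combination hs)
      have hle : AddSubgroup.closure {((r * k', 0) : ℤ × ℤ), (m, n)} ≤
          AddSubgroup.closure {((k', 0) : ℤ × ℤ), (m, n)} := by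
        rw [AddSubgroup.closure_le]
        rintro z (rfl | rfl)
        · exact (mem_closure_pair_iff k' m n (r * k', 0)).2 ⟨r, 0, by simp [mul_comm]⟩
        · exact (mem_closure_pair_iff k' m n (m, n)).2 ⟨0, 1, by simp⟩
      have hKeq := hmax _ hle (sym_pair p q hq hcop k' m n hqd)
      have hmem : ((k', 0) : ℤ × ℤ) ∈ AddSubgroup.closure {((r * k', 0) : ℤ × ℤ), (m, n)} := by
        rw [← hKeq]
        exact (mem_closure_pair_iff k' m n (k', 0)).2 ⟨1, 0, by simp⟩
      obtain ⟨a, b, hab⟩ := (mem_closure_pair_iff (r * k') m n (k', 0)).1 hmem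
      rw [Prod.ext_iff] at hab
      obtain ⟨h1, h2⟩ := hab
      simp only at h1 h2
      have hb : b = 0 := by
        rcases mul_eq_zero.1 h2.symm with h | h
        · exact h
        · omega
      subst hb
      have hk'0 : k' ≠ 0 := by rintro rfl; simp at hk
      have har : (a * r) * k' = 1 * k' := by linear_combination -h1
      have har' : a * r = 1 := mul_right_cancel₀ hk'0 har
      exact hrp.not_isUnit (IsUnit.of_mul_eq_one (a := r) a (by linear_combination har'))
    · -- r ∣ n case
      have hrn : r ∣ n := (hrp.dvd_mul.mp hrnk).resolve_right hrk
      obtain ⟨n', hn'⟩ := hrn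
      subst hn'
      subst hs'
      have hcoprk : IsCoprime r k := hrp.coprime_iff_not_dvd.mpr hrk
      obtain ⟨u, v, huv⟩ := hcoprk
      have hqd : q ∣ k * n' := by
        refine ⟨s', ?_⟩
        exact mul_left_cancel₀ hr0 (show r * (k * n') = r * (q * s') by linear_combination hs)
      have hle : AddSubgroup.closure {((k, 0) : ℤ × ℤ), (m, r * n')} ≤
          AddSubgroup.closure {((k, 0) : ℤ × ℤ), (m * u, n')} := by
        rw [AddSubgroup.closure_le]
        rintro z (rfl | rfl)
        · exact (mem_closure_pair_iff k (m * u) n' (k, 0)).2 ⟨1, 0, by simp⟩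
        · refine (mem_closure_pair_iff k (m * u) n' (m, r * n')).2 ⟨m * v, r, ?_⟩
          rw [Prod.ext_iff]
          refine ⟨?_, ?_⟩
          · show m = m * v * k + r * (m * u); linear_combination m * huv.symm
          · show r * n' = r * n'; rfl
      have hKeq := hmax _ hle (sym_pair p q hq hcop k (m * u) n' hqd)
      have hmem : ((m * u, n') : ℤ × ℤ) ∈ AddSubgroup.closure {((k, 0) : ℤ × ℤ), (m, r * n')} := by
        rw [← hKeq]
        exact (mem_closure_pair_iff k (m * u) n' (m * u, n')).2 ⟨0, 1, by simp⟩
      obtain ⟨a, b, hab⟩ := (mem_closure_pair_iff k m (r * n') (m * u, n')).1 hmem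
      rw [Prod.ext_iff] at hab
      obtain ⟨h1, h2⟩ := hab
      simp only at h1 h2
      have hn'0 : n' ≠ 0 := by rintro rfl; simp at hn
      have hbr : (b * r) * n' = 1 * n' := by linear_combination -h2
      have hbr' : b * r = 1 := mul_right_cancel₀ hn'0 hbr
      exact hrp.not_isUnit (IsUnit.of_mul_eq_one (a := r) b (by linear_combination hbr'))
  · intro hnk
    subst hnk
    refine ⟨sym_pair p _ hq hcop k m n ⟨1, by ring⟩, ?_⟩
    intro K hK hKsym
    refine le_antisymm ?_ hK
    intro x hx
    have hg1K : ((k, 0) : ℤ × ℤ) ∈ K := hK (AddSubgroup.subset_closure (by simp))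
    have hg2K : ((m, n) : ℤ × ℤ) ∈ K := hK (AddSubgroup.subset_closure (by simp))
    have h1 : n * k ∣ (0 * x.1 - k * x.2) := by
      simpa using (key p (n * k) hq hcop (k, 0) x).1 (hKsym _ hg1K _ hx)
    obtain ⟨c, hc⟩ := h1
    have hcc : k * x.2 = k * (n * (-c)) := by linear_combination -hc
    have hx2 : x.2 = n * (-c) := mul_left_cancel₀ hk.ne' hcc
    have h2 : n * k ∣ (n * x.1 - m * x.2) := by
      simpa using (key p (n * k) hq hcop (m, n) x).1 (hKsym _ hg2K _ hx)
    obtain ⟨d, hd⟩ := h2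
    have hdd : n * x.1 = n * (m * (-c) + k * d) := by
      rw [hx2] at hd; linear_combination hd
    have hx1 : x.1 = m * (-c) + k * d := mul_left_cancel₀ hn.ne' hdd
    refine (mem_closure_pair_iff k m n x).2 ⟨d, -c, ?_⟩
    rw [Prod.ext_iff]
    exact ⟨by rw [hx1]; ring, by rw [hx2]; ring⟩
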